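/- arXiv:1407.3363 — 10 statements merged into one kernel-verified Lean document; each statement's English description precedes it below -/
import Mathlib

section
/- For any graph G of order n with maximum degree Δ ≥ k and minimum degree δ ≥ k−1, the Roman k-tuple domination number satisfies γ_{×kR}(G) ≥ 2n/(Δ/k + 1). -/
open Finset

/-- A Roman k-tuple dominating function: values in {0,1,2}; vertices with value 0
have at least k neighbors with value 2; vertices with nonzero value have at least
k-1 neighbors with value 2. -/
def IsRkTDF {V : Type*} (G : SimpleGraph V) (k : ℕ) (f : V → ℕ) : Prop :=
  (∀ v, f v ≤ 2) ∧
  (∀ v, f v = 0 → k ≤ {w | G.Adj v w ∧ f w = 2}.ncard) ∧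
  (∀ v, f v ≠ 0 → k - 1 ≤ {w | G.Adj v w ∧ f w = 2}.ncard)

/-- The Roman k-tuple domination number: minimum weight of a Roman k-tuple
dominating function. -/
noncomputable def romanKTDN {V : Type*} [Fintype V] (G : SimpleGraph V) (k : ℕ) : ℕ :=
  sInf {n | ∃ f : V → ℕ, IsRkTDF G k f ∧ ∑ v, f v = n}

/-- A k-tuple dominating set: every vertex has at least k members of S in its
closed neighborhood. -/
def IsKTupleDomSet {V : Type*} (G : SimpleGraph V) (k : ℕ) (S : Set V) : Prop :=
  ∀ v, k ≤ {w ∈ S | w = v ∨ G.Adj v w}.ncard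

/-- The k-tuple domination number. -/
noncomputable def kTupleDomNum {V : Type*} (G : SimpleGraph V) (k : ℕ) : ℕ :=
  sInf {n | ∃ S : Set V, IsKTupleDomSet G k S ∧ S.ncard = n}

lemma arith_aux (a b z n m D : ℕ) (hD : 1 + m ≤ D) (hn : n = z + b + a)
    (hkey : m * n + z ≤ D * a) : 2 * (m + 1) * n ≤ (D + (m + 1)) * (b + 2 * a) := by
  subst hn
  have step1 : 2 * (m + 1) * (z + b + a) = 2 * (m * (z + b + a) + z) + 2 * b + 2 * a := by
    ring
  have step2 : 2 * (m * (z + b + a) + z) ≤ 2 * (D * a) := Nat.mul_le_mul_left 2 hkey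
  have e1 : b ≤ D * b := Nat.le_mul_of_pos_left b (by omega)
  have e2 : b ≤ (m + 1) * b := Nat.le_mul_of_pos_left b (by omega)
  have e3 : 2 * a ≤ 2 * ((m + 1) * a) :=
    Nat.mul_le_mul_left 2 (Nat.le_mul_of_pos_left a (by omega))
  have expand : (D + (m + 1)) * (b + 2 * a)
      = D * b + 2 * (D * a) + (m + 1) * b + 2 * ((m + 1) * a) := by ring
  omega

theorem stmt0 {V : Type*} [Fintype V] (G : SimpleGraph V) (k Δ : ℕ)
    (hk : 1 ≤ k)
    (hΔ : Δ = sSup {d | ∃ v : V, (G.neighborSet v).ncard = d})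
    (hΔk : k ≤ Δ)
    (hδ : ∀ v : V, k - 1 ≤ (G.neighborSet v).ncard) :
    (2 * (Fintype.card V : ℝ)) / ((Δ : ℝ) / (k : ℝ) + 1) ≤ (romanKTDN G k : ℝ) := by
  classical
  have hncard : ∀ v : V, (G.neighborSet v).ncard = G.degree v := by
    intro v
    rw [Set.ncard_eq_toFinset_card', SimpleGraph.degree]
    congr 1
  have hbdd : BddAbove {d | ∃ v : V, (G.neighborSet v).ncard = d} := by
    refine ⟨Fintype.card V, ?_⟩
    rintro d ⟨v, rfl⟩
    rw [hncard]
    exact (G.neighborFinset v).card_le_univ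
  have hdeg : ∀ w : V, G.degree w ≤ Δ := by
    intro w
    rw [hΔ, ← hncard w]
    exact le_csSup hbdd ⟨w, rfl⟩
  have hsum2 : ∑ _v : V, (2:ℕ) = 2 * Fintype.card V := by
    rw [Finset.sum_const, smul_eq_mul, Nat.mul_comm]; rfl
  have hne : (2 * Fintype.card V) ∈ {n | ∃ f : V → ℕ, IsRkTDF G k f ∧ ∑ v, f v = n} := by
    refine ⟨fun _ => 2, ⟨fun v => le_refl 2, fun v h => by simp at h, fun v _ => ?_⟩, hsum2⟩
    have h2 : {w | G.Adj v w ∧ (2:ℕ) = 2} = G.neighborSet v := by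
      ext w; simp [SimpleGraph.neighborSet]
    rw [h2]; exact hδ v
  obtain ⟨f, hf, hsum⟩ := Nat.sInf_mem (Set.nonempty_of_mem hne)
  obtain ⟨hf2, hf0, hf1⟩ := hf
  have hsum' : ∑ v, f v = romanKTDN G k := hsum
  clear hne hsum hsum2
  -- partition of the vertex set into the three classes
  have hpart : Fintype.card V =
      (univ.filter (fun w => f w = 0)).card + (univ.filter (fun w => f w = 1)).card
        + (univ.filter (fun w => f w = 2)).card := by
    have e0 : (univ.filter (fun w => f w = 0)).card + (univ.filter (fun w => ¬ f w = 0)).card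
        = Fintype.card V :=
      Finset.card_filter_add_card_filter_not _
    have e1 : univ.filter (fun w => ¬ f w = 0)
        = univ.filter (fun w => f w = 1) ∪ univ.filter (fun w => f w = 2) := by
      ext v
      simp only [Finset.mem_filter, Finset.mem_union, Finset.mem_univ, true_and]
      have := hf2 v; omega
    have e2 : ((univ.filter (fun w => f w = 1)) ∪ (univ.filter (fun w => f w = 2))).card
        = (univ.filter (fun w => f w = 1)).card + (univ.filter (fun w => f w = 2)).card := by
      apply Finset.card_union_of_disjoint
      rw [Finset.disjoint_left]
      intro a ha hb
      simp only [Finset.mem_filter] at ha hb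
      omega
    rw [e1, e2] at e0
    omega
  -- weight of f
  have hweight : ∑ v, f v = (univ.filter (fun w => f w = 1)).card
      + 2 * (univ.filter (fun w => f w = 2)).card := by
    rw [← Finset.sum_filter_add_sum_filter_not univ (fun v => f v = 2)]
    have e1 : ∑ v ∈ univ.filter (fun v => f v = 2), f v
        = ∑ _v ∈ univ.filter (fun v => f v = 2), 2 :=
      Finset.sum_congr rfl (fun v hv => (Finset.mem_filter.1 hv).2)
    have e2 : univ.filter (fun v => ¬ f v = 2)
        = univ.filter (fun w => f w = 0) ∪ univ.filter (fun w => f w = 1) := by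
      ext v
      simp only [Finset.mem_filter, Finset.mem_union, Finset.mem_univ, true_and]
      have := hf2 v; omega
    have e3 : ∑ v ∈ univ.filter (fun w => f w = 0) ∪ univ.filter (fun w => f w = 1), f v
        = ∑ v ∈ univ.filter (fun w => f w = 0), f v
          + ∑ v ∈ univ.filter (fun w => f w = 1), f v := by
      apply Finset.sum_union
      rw [Finset.disjoint_left]
      intro a ha hb
      simp only [Finset.mem_filter] at ha hb
      omega
    have e4 : ∑ v ∈ univ.filter (fun w => f w = 0), f v = 0 :=
      Finset.sum_eq_zero (fun v hv => (Finset.mem_filter.1 hv).2)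
    have e5 : ∑ v ∈ univ.filter (fun w => f w = 1), f v
        = ∑ _v ∈ univ.filter (fun w => f w = 1), 1 :=
      Finset.sum_congr rfl (fun v hv => (Finset.mem_filter.1 hv).2)
    rw [e1, e2, e3, e4, e5, Finset.sum_const, Finset.sum_const, smul_eq_mul, smul_eq_mul,
      mul_one]
    omega
  -- lower bound on neighbors with value 2, per vertex
  have hlow : ∀ v : V, (k - 1) + (if f v = 0 then 1 else 0)
      ≤ (((univ.filter (fun w => f w = 2))).filter (fun w => G.Adj v w)).card := by
    intro v
    have hcnt : (((univ.filter (fun w => f w = 2))).filter (fun w => G.Adj v w)).card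
        = {w | G.Adj v w ∧ f w = 2}.ncard := by
      rw [← Set.ncard_coe_finset]
      congr 1
      ext w
      simp [and_comm]
    rw [hcnt]
    by_cases h : f v = 0
    · simp only [h, if_true]
      have := hf0 v h; omega
    · simp only [h, if_false]
      have := hf1 v h; omega
  -- double counting
  have hdouble : ∑ v, (((univ.filter (fun w => f w = 2))).filter (fun w => G.Adj v w)).card
      = ∑ w ∈ univ.filter (fun w => f w = 2), G.degree w := by
    simp only [Finset.card_filter]
    rw [Finset.sum_comm]
    apply Finset.sum_congr rfl
    intro w _
    rw [SimpleGraph.degree, SimpleGraph.neighborFinset_eq_filter]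
    simp only [Finset.card_filter]
    apply Finset.sum_congr rfl
    intro v _
    simp [G.adj_comm]
  have hub : ∑ w ∈ univ.filter (fun w => f w = 2), G.degree w
      ≤ Δ * (univ.filter (fun w => f w = 2)).card := by
    calc ∑ w ∈ univ.filter (fun w => f w = 2), G.degree w
        ≤ ∑ _w ∈ univ.filter (fun w => f w = 2), Δ :=
          Finset.sum_le_sum (fun w _ => hdeg w)
      _ = Δ * (univ.filter (fun w => f w = 2)).card := by
          rw [Finset.sum_const, smul_eq_mul, mul_comm]
  have hlb : (k - 1) * Fintype.card V + (univ.filter (fun w => f w = 0)).card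
      ≤ ∑ v, (((univ.filter (fun w => f w = 2))).filter (fun w => G.Adj v w)).card := by
    have e : ∑ v : V, ((k - 1) + (if f v = 0 then 1 else 0))
        = (k - 1) * Fintype.card V + (univ.filter (fun w => f w = 0)).card := by
      rw [Finset.sum_add_distrib, Finset.sum_const, smul_eq_mul, mul_comm,
        Finset.card_filter]
      rfl
    rw [← e]
    exact Finset.sum_le_sum (fun v _ => hlow v)
  -- the key natural-number inequality
  have key : 2 * k * Fintype.card V ≤ (Δ + k) * romanKTDN G k := by
    have h1 : (k - 1) * Fintype.card V + (univ.filter (fun w => f w = 0)).card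
        ≤ Δ * (univ.filter (fun w => f w = 2)).card :=
      le_trans hlb (le_trans (le_of_eq hdouble) hub)
    rw [← hsum', hweight]
    obtain ⟨m, hm⟩ := Nat.exists_eq_add_of_le hk
    have hkm : k - 1 = m := by omega
    have hkm' : k = m + 1 := by omega
    rw [hkm] at h1
    rw [hkm']
    exact arith_aux _ _ _ _ _ _ (by omega) hpart h1
  -- pass to the reals
  have hk' : (0:ℝ) < (k:ℝ) := by exact_mod_cast hk
  have hpos : (0:ℝ) < (Δ:ℝ)/(k:ℝ) + 1 := by positivity
  rw [div_le_iff₀ hpos]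
  have hcast : (2 * k * Fintype.card V : ℝ) ≤ ((Δ:ℝ) + k) * romanKTDN G k := by
    exact_mod_cast key
  have hx : (k:ℝ) * ((Δ:ℝ)/(k:ℝ)) = (Δ:ℝ) := mul_div_cancel₀ _ (ne_of_gt hk')
  nlinarith [hcast, hx, hk', mul_pos hk' hpos]
end

section
/- Let G be a graph of order n with minimum degree at least k−1 ≥ 1. Then γ_{×kR}(G) = 2k if and only if G = K_k or G = H ∘_k K_k for some graph H (i.e., G is obtained from the disjoint union of some graph H and K_k by joining each vertex of H to at least k vertices of K_k, i.e., to all k vertices of K_k). -/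
open Finset

/-- The value-2 neighborhood is contained in the value-2 set minus the vertex. -/
lemma nbr_sub {V : Type*} (G : SimpleGraph V) (f : V → ℕ) (v : V) :
    {w | G.Adj v w ∧ f w = 2} ⊆ {w | f w = 2} \ {v} := by
  intro w hw
  exact ⟨hw.2, fun h => G.ne_of_adj hw.1 (by simpa using h.symm)⟩

/-- Any RkTDF on a nonempty graph with k ≥ 2 has at least k vertices of value 2. -/
lemma key_card {V : Type*} [Fintype V] [Nonempty V] (G : SimpleGraph V) (k : ℕ)
    (hk : 2 ≤ k) (f : V → ℕ) (hf : IsRkTDF G k f) :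
    k ≤ {v | f v = 2}.ncard := by
  have hlow : ∀ v, k - 1 ≤ {w | G.Adj v w ∧ f w = 2}.ncard := by
    intro v
    rcases eq_or_ne (f v) 0 with h0 | h0
    · have := hf.2.1 v h0; omega
    · exact hf.2.2 v h0
  rcases Set.eq_empty_or_nonempty {v | f v = 2} with hS | ⟨v, hv⟩
  · exfalso
    obtain ⟨v⟩ := ‹Nonempty V›
    have h1 := hlow v
    have h2 : {w | G.Adj v w ∧ f w = 2} = ∅ := by
      apply Set.eq_empty_of_subset_empty
      refine (nbr_sub G f v).trans ?_
      rw [hS]; simp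
    rw [h2, Set.ncard_empty] at h1
    omega
  · have h1 := hlow v
    have h2 := Set.ncard_le_ncard (nbr_sub G f v) (Set.toFinite _)
    have h3 : ({w | f w = 2} \ {v}).ncard = {w | f w = 2}.ncard - 1 :=
      Set.ncard_diff_singleton_of_mem hv
    have h4 : 0 < {w | f w = 2}.ncard :=
      (Set.ncard_pos (Set.toFinite _)).mpr ⟨v, hv⟩
    omega

open Classical in
lemma weight_ge {V : Type*} [Fintype V] (f : V → ℕ) :
    2 * {v | f v = 2}.ncard ≤ ∑ v, f v := by
  rw [Set.ncard_eq_toFinset_card']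
  have h1 : ∑ v ∈ {v | f v = 2}.toFinset, f v = 2 * {v | f v = 2}.toFinset.card := by
    rw [Finset.sum_congr rfl (fun v hv => by
      have := Set.mem_toFinset.mp hv
      exact this)]
    simp [mul_comm]
  rw [← h1]
  exact Finset.sum_le_sum_of_subset (Finset.subset_univ _)

theorem stmt2 {V : Type*} [Fintype V] (G : SimpleGraph V) (k : ℕ)
    (hk : 2 ≤ k)
    (hδ : ∀ v : V, k - 1 ≤ (G.neighborSet v).ncard) :
    romanKTDN G k = 2 * k ↔
      ∃ S : Finset V, S.card = k ∧ (G.IsClique (S : Set V)) ∧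
        ∀ v ∉ S, ∀ w ∈ S, G.Adj v w := by
  classical
  constructor
  · intro h
    have hne : {n | ∃ f : V → ℕ, IsRkTDF G k f ∧ ∑ v, f v = n}.Nonempty := by
      refine ⟨∑ v : V, 2, fun _ => 2,
        ⟨fun v => le_refl 2, fun v hv => absurd hv (by norm_num), ?_⟩, rfl⟩
      intro v _
      have h' : {w | G.Adj v w ∧ (fun _ : V => (2:ℕ)) w = 2} = G.neighborSet v := by
        ext w; simp [SimpleGraph.neighborSet]
      rw [h']
      exact hδ v
    have hmem := Nat.sInf_mem hne
    rw [romanKTDN] at h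
    rw [h] at hmem
    obtain ⟨f, hf, hsum⟩ := hmem
    clear h hne
    have hVne : Nonempty V := by
      by_contra hV
      have : IsEmpty V := not_nonempty_iff.mp hV
      rw [Finset.univ_eq_empty, Finset.sum_empty] at hsum
      omega
    have hkS : k ≤ {v | f v = 2}.ncard := key_card G k hk f hf
    have hwS : 2 * {v | f v = 2}.ncard ≤ ∑ v, f v := weight_ge f
    have hScard : {v | f v = 2}.ncard = k := by omega
    obtain ⟨T, hT⟩ : ∃ T : Finset V, ∀ w, w ∈ T ↔ f w = 2 :=
      ⟨Finset.univ.filter (fun w => f w = 2), fun w => by simp⟩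
    have hTcard : T.card = k := by
      have h1 : (T : Set V) = {v | f v = 2} := by
        ext w; simp [hT w]
      have h2 := Set.ncard_coe_finset T
      rw [h1, hScard] at h2
      omega
    have hzero : ∀ v, v ∉ T → f v = 0 := by
      have hsplit := Finset.sum_sdiff (Finset.subset_univ T) (f := f)
      have hSsum : ∑ x ∈ T, f x = 2 * T.card := by
        rw [Finset.sum_congr rfl (fun x hx => (hT x).mp hx)]
        simp [mul_comm]
      have hrest : ∑ x ∈ Finset.univ \ T, f x = 0 := by omega
      intro v hv
      exact Finset.sum_eq_zero_iff.mp hrest v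
        (Finset.mem_sdiff.mpr ⟨Finset.mem_univ v, hv⟩)
    refine ⟨T, hTcard, ?_, ?_⟩
    · -- clique
      intro u hu v hv huv
      have hu' : f u = 2 := (hT u).mp (Finset.mem_coe.mp hu)
      have hv' : f v = 2 := (hT v).mp (Finset.mem_coe.mp hv)
      have hge := hf.2.2 u (by omega)
      have humem : u ∈ {w | f w = 2} := hu'
      have hdiff : ({w | f w = 2} \ {u}).ncard = k - 1 := by
        rw [Set.ncard_diff_singleton_of_mem humem, hScard]
      have heq : {w | G.Adj u w ∧ f w = 2} = {w | f w = 2} \ {u} :=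
        Set.eq_of_subset_of_ncard_le (nbr_sub G f u) (by omega) (Set.toFinite _)
      have hvmem : v ∈ {w | f w = 2} \ {u} :=
        ⟨hv', fun hc => huv (Set.mem_singleton_iff.mp hc).symm⟩
      rw [← heq] at hvmem
      exact hvmem.1
    · -- domination
      intro v hv w hw
      have hfv : f v = 0 := hzero v hv
      have hge := hf.2.1 v hfv
      have heq : {x | G.Adj v x ∧ f x = 2} = {x | f x = 2} :=
        Set.eq_of_subset_of_ncard_le ((nbr_sub G f v).trans Set.diff_subset)
          (by omega) (Set.toFinite _)
      have hwmem : w ∈ {x | f x = 2} := (hT w).mp hw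
      rw [← heq] at hwmem
      exact hwmem.1
  · rintro ⟨S, hScard, hClique, hDom⟩
    obtain ⟨f, hfdef⟩ : ∃ f : V → ℕ, ∀ w, f w = if w ∈ S then 2 else 0 :=
      ⟨_, fun _ => rfl⟩
    have hf2 : ∀ w, f w = 2 ↔ w ∈ S := by
      intro w; rw [hfdef]; split_ifs with h <;> simp [h]
    have hf0 : ∀ w, f w ≠ 0 ↔ w ∈ S := by
      intro w; rw [hfdef]; split_ifs with h <;> simp [h]
    have hfRkTDF : IsRkTDF G k f := by
      refine ⟨fun v => by rw [hfdef]; split_ifs <;> omega, ?_, ?_⟩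
      · intro v hv
        have hvS : v ∉ S := fun hm => ((hf0 v).mpr hm) hv
        have hset : {w | G.Adj v w ∧ f w = 2} = (S : Set V) := by
          ext w
          simp only [Set.mem_setOf_eq, Finset.mem_coe, hf2]
          exact ⟨fun hh => hh.2, fun hh => ⟨hDom v hvS w hh, hh⟩⟩
        rw [hset, Set.ncard_coe_finset, hScard]
      · intro v hv
        have hvS : v ∈ S := (hf0 v).mp hv
        have hsup : ((S.erase v : Finset V) : Set V) ⊆ {w | G.Adj v w ∧ f w = 2} := by
          intro w hw
          have hw' : w ∈ S.erase v := hw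
          have hwS : w ∈ S := Finset.mem_of_mem_erase hw'
          have hwv : w ≠ v := Finset.ne_of_mem_erase hw'
          exact ⟨(hClique hvS hwS (fun hc => hwv hc.symm)), (hf2 w).mpr hwS⟩
        have hle := Set.ncard_le_ncard hsup (Set.toFinite _)
        rwa [Set.ncard_coe_finset, Finset.card_erase_of_mem hvS, hScard] at hle
    have hsum : ∑ v, f v = 2 * k := by
      have heq : ∑ v, f v = ∑ v : V, if v ∈ S then 2 else 0 :=
        Finset.sum_congr rfl (fun v _ => hfdef v)
      rw [heq, Finset.sum_ite_mem, Finset.univ_inter, Finset.sum_const, hScard,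
        smul_eq_mul, mul_comm]
    have hub : romanKTDN G k ≤ 2 * k := by
      rw [romanKTDN]
      exact Nat.sInf_le ⟨f, hfRkTDF, hsum⟩
    have hVne : Nonempty V := by
      have hS : S.Nonempty := Finset.card_pos.mp (by omega)
      exact ⟨hS.choose⟩
    have hlb : 2 * k ≤ romanKTDN G k := by
      rw [romanKTDN]
      refine le_csInf ⟨2 * k, f, hfRkTDF, hsum⟩ ?_
      rintro n ⟨g, hg, hgsum⟩
      have h1 := key_card G k hk g hg
      have h2 := weight_ge g
      omega
    exact le_antisymm hub hlb
end

section
/- If k ≥ 2 and G is a (k−1)-regular graph of order n, then γ_{×kR}(G) = 2n. -/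
open Finset

lemma rktdf_all_two {V : Type*} [Fintype V] [DecidableEq V] (G : SimpleGraph V)
    [DecidableRel G.Adj] (k : ℕ) (hk : 2 ≤ k)
    (hreg : G.IsRegularOfDegree (k - 1)) (f : V → ℕ) (hf : IsRkTDF G k f) :
    ∀ v, f v = 2 := by
  obtain ⟨h2, h0, h1⟩ := hf
  have hN : ∀ v, (G.neighborSet v).ncard = k - 1 := by
    intro v
    rw [Set.ncard_eq_toFinset_card']
    exact hreg v
  have hsub : ∀ v, {w | G.Adj v w ∧ f w = 2} ⊆ G.neighborSet v := by
    intro v w hw; exact hw.1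
  have hne : ∀ v, f v ≠ 0 := by
    intro v hv
    have := h0 v hv
    have hle : {w | G.Adj v w ∧ f w = 2}.ncard ≤ (G.neighborSet v).ncard :=
      Set.ncard_le_ncard (hsub v) (Set.toFinite _)
    rw [hN v] at hle
    omega
  have heq : ∀ v, {w | G.Adj v w ∧ f w = 2} = G.neighborSet v := by
    intro v
    apply Set.eq_of_subset_of_ncard_le (hsub v) _ (Set.toFinite _)
    rw [hN v]
    exact h1 v (hne v)
  intro v
  have hdeg : 0 < G.degree v := by rw [hreg v]; omega
  obtain ⟨w, hw⟩ := Finset.card_pos.mp (by rwa [G.card_neighborFinset_eq_degree])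
  rw [G.mem_neighborFinset] at hw
  have : v ∈ {u | G.Adj w u ∧ f u = 2} := by
    rw [heq w]; exact hw.symm
  exact this.2

theorem stmt3 {V : Type*} [Fintype V] [DecidableEq V] (G : SimpleGraph V)
    [DecidableRel G.Adj] (k : ℕ) (hk : 2 ≤ k)
    (hreg : G.IsRegularOfDegree (k - 1)) :
    romanKTDN G k = 2 * Fintype.card V := by
  have hall : ∀ n ∈ {n | ∃ f : V → ℕ, IsRkTDF G k f ∧ ∑ v, f v = n},
      n = 2 * Fintype.card V := by
    rintro n ⟨f, hf, rfl⟩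
    have := rktdf_all_two G k hk hreg f hf
    calc ∑ v, f v = ∑ _v : V, 2 := Finset.sum_congr rfl (fun v _ => this v)
    _ = 2 * Fintype.card V := by rw [Finset.sum_const, Fintype.card]; ring
  have hmem : 2 * Fintype.card V ∈ {n | ∃ f : V → ℕ, IsRkTDF G k f ∧ ∑ v, f v = n} := by
    refine ⟨fun _ => 2, ⟨fun v => le_refl 2, fun v hv => by simp at hv, fun v _ => ?_⟩, ?_⟩
    · have : {w | G.Adj v w ∧ (2:ℕ) = 2} = G.neighborSet v := by ext w; simp
      rw [this, Set.ncard_eq_toFinset_card']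
      exact (hreg v).ge
    · rw [Finset.sum_const, Fintype.card]; ring
  unfold romanKTDN
  exact le_antisymm (Nat.sInf_le hmem) (le_csInf ⟨_, hmem⟩ fun n hn => (hall n hn).ge)
end

section
/- Let G be a graph of order n without isolated vertices. Then γ_{×2R}(G) = 2n if and only if G is a disjoint union of ℓ copies of K_2 for some ℓ ≥ 1 (i.e., G is 1-regular). -/
open Finset

lemma setcard_le_degree {V : Type*} [Fintype V] (G : SimpleGraph V) [DecidableRel G.Adj]
    (v : V) (P : V → Prop) : {w | G.Adj v w ∧ P w}.ncard ≤ G.degree v := by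
  rw [← SimpleGraph.card_neighborFinset_eq_degree, ← Set.ncard_coe_finset]
  refine Set.ncard_le_ncard ?_ (Set.toFinite _)
  intro w hw
  simp only [Finset.coe_sort_coe, Set.mem_setOf_eq] at hw ⊢
  simp [SimpleGraph.mem_neighborFinset, hw.1]

lemma one_le_ncard_of_mem {V : Type*} [Fintype V] {s : Set V} {x : V} (hx : x ∈ s) :
    1 ≤ s.ncard :=
  (Set.ncard_pos (Set.toFinite _)).mpr ⟨x, hx⟩

lemma exists_neighbor {V : Type*} [Fintype V] (G : SimpleGraph V) [DecidableRel G.Adj]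
    (u : V) (h : 0 < G.degree u) : ∃ w, G.Adj u w := by
  rw [← SimpleGraph.card_neighborFinset_eq_degree, Finset.card_pos] at h
  obtain ⟨w, hw⟩ := h
  exact ⟨w, (SimpleGraph.mem_neighborFinset G u w).mp hw⟩

lemma exists_neighbor_ne {V : Type*} [Fintype V] [DecidableEq V] (G : SimpleGraph V)
    [DecidableRel G.Adj] (u x : V) (h : 2 ≤ G.degree u) : ∃ w, G.Adj u w ∧ w ≠ x := by
  have h1 : 1 < (G.neighborFinset u).card := by
    rw [SimpleGraph.card_neighborFinset_eq_degree]; omega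
  obtain ⟨w, hw, hne⟩ := Finset.exists_mem_ne h1 x
  exact ⟨w, (SimpleGraph.mem_neighborFinset G u w).mp hw, hne⟩

theorem stmt4 {V : Type*} [Fintype V] [DecidableEq V] (G : SimpleGraph V)
    [DecidableRel G.Adj]
    (hiso : ∀ v : V, 0 < G.degree v) :
    romanKTDN G 2 = 2 * Fintype.card V ↔ G.IsRegularOfDegree 1 := by
  have hconst : IsRkTDF G 2 (fun _ => 2) := by
    refine ⟨fun v => le_refl 2, fun v h => by simp at h, fun v _ => ?_⟩
    obtain ⟨w, hw⟩ := exists_neighbor G v (hiso v)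
    refine le_trans (by norm_num) (one_le_ncard_of_mem (x := w) ?_)
    exact ⟨hw, rfl⟩
  have hmem : (2 * Fintype.card V) ∈
      {n | ∃ f : V → ℕ, IsRkTDF G 2 f ∧ ∑ v, f v = n} := by
    exact ⟨fun _ => 2, hconst, by simp [Finset.sum_const, mul_comm]⟩
  constructor
  · intro h2n
    by_contra hnreg
    simp only [SimpleGraph.IsRegularOfDegree] at hnreg
    push_neg at hnreg
    obtain ⟨v, hv⟩ := hnreg
    have hdv : 2 ≤ G.degree v := by have := hiso v; omega
    -- build a function f of weight < 2n
    have key : ∃ f : V → ℕ, IsRkTDF G 2 f ∧ ∑ u, f u < 2 * Fintype.card V := by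
      by_cases hp : ∃ p, G.Adj v p ∧ G.degree p = 1
      · -- Case A: pendant neighbor p of v; f = 2 except f p = 1
        obtain ⟨p, hvp, hdp⟩ := hp
        have hNp : ∀ u, G.Adj p u → u = v := by
          intro u hu
          have h1 : (G.neighborFinset p).card ≤ 1 := by
            rw [SimpleGraph.card_neighborFinset_eq_degree]; omega
          exact Finset.card_le_one.mp h1 u ((SimpleGraph.mem_neighborFinset G p u).mpr hu)
            v ((SimpleGraph.mem_neighborFinset G p v).mpr hvp.symm)
        refine ⟨fun w => if w = p then 1 else 2, ⟨fun u => by dsimp; split <;> omega,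
          fun u hu => by dsimp at hu; split at hu <;> omega, fun u _ => ?_⟩, ?_⟩
        · -- need a neighbor w of u with w ≠ p
          have : ∃ w, G.Adj u w ∧ w ≠ p := by
            by_cases huv : u = v
            · obtain ⟨w, hw, hwp⟩ := exists_neighbor_ne G v p hdv
              exact ⟨w, by rw [huv]; exact hw, hwp⟩
            · obtain ⟨w, hw⟩ := exists_neighbor G u (hiso u)
              refine ⟨w, hw, ?_⟩
              rintro rfl
              exact huv (hNp u hw.symm)
          obtain ⟨w, hw, hwp⟩ := this
          refine le_trans (by norm_num) (one_le_ncard_of_mem (x := w) ?_)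
          exact ⟨hw, by simp [hwp]⟩
        · -- weight < 2n
          have := Finset.sum_lt_sum (s := Finset.univ)
            (f := fun w => if w = p then (1:ℕ) else 2) (g := fun _ => 2)
            (fun i _ => by split <;> omega)
            ⟨p, Finset.mem_univ p, by simp⟩
          simpa [Finset.sum_const, mul_comm, Finset.card_univ] using this
      · -- Case B: all neighbors of v have degree ≥ 2; f = 2 except f v = 0
        push_neg at hp
        have hp2 : ∀ u, G.Adj v u → 2 ≤ G.degree u := by
          intro u hu; have := hp u hu; have := hiso u; omega
        refine ⟨fun w => if w = v then 0 else 2, ⟨fun u => by dsimp; split <;> omega,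
          fun u hu => ?_, fun u hu => ?_⟩, ?_⟩
        · dsimp at hu
          have huv : u = v := by by_contra h; simp [h] at hu
          subst huv
          have hsub : (G.neighborFinset u : Set V) ⊆ {w | G.Adj u w ∧
              (if w = u then 0 else 2) = 2} := by
            intro w hw
            simp only [Finset.coe_sort_coe, Finset.mem_coe,
              SimpleGraph.mem_neighborFinset] at hw
            have hne : w ≠ u := fun h => G.irrefl (h ▸ hw)
            exact ⟨hw, by simp [hne]⟩
          calc (2:ℕ) ≤ G.degree u := hdv
            _ = (G.neighborFinset u : Set V).ncard := by
                rw [Set.ncard_coe_finset, SimpleGraph.card_neighborFinset_eq_degree]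
            _ ≤ _ := Set.ncard_le_ncard hsub (Set.toFinite _)
        · -- nonzero value: need a neighbor w of u with w ≠ v
          dsimp at hu
          have huv : u ≠ v := by rintro rfl; simp at hu
          have : ∃ w, G.Adj u w ∧ w ≠ v := by
            obtain ⟨w, hw⟩ := exists_neighbor G u (hiso u)
            by_cases hwv : w = v
            · exact exists_neighbor_ne G u v (hp2 u (by rw [← hwv]; exact hw.symm))
            · exact ⟨w, hw, hwv⟩
          obtain ⟨w, hw, hwv⟩ := this
          refine le_trans (by norm_num) (one_le_ncard_of_mem (x := w) ?_)
          exact ⟨hw, by simp [hwv]⟩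
        · have := Finset.sum_lt_sum (s := Finset.univ)
            (f := fun w => if w = v then (0:ℕ) else 2) (g := fun _ => 2)
            (fun i _ => by split <;> omega)
            ⟨v, Finset.mem_univ v, by simp⟩
          simpa [Finset.sum_const, mul_comm, Finset.card_univ] using this
    obtain ⟨f, hf, hlt⟩ := key
    have hle : romanKTDN G 2 ≤ ∑ u, f u := Nat.sInf_le ⟨f, hf, rfl⟩
    omega
  · intro hreg
    have hall : ∀ f : V → ℕ, IsRkTDF G 2 f → ∀ v, f v = 2 := by
      rintro f ⟨h1, h2, h3⟩ v
      have hv0 : ∀ u, f u ≠ 0 := by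
        intro u hu
        have h := h2 u hu
        have hle := setcard_le_degree G u (fun w => f w = 2)
        rw [hreg u] at hle; omega
      by_contra hne
      have hv1 : f v = 1 := by have := h1 v; have := hv0 v; omega
      have hcard := h3 v (hv0 v)
      have hle := setcard_le_degree G v (fun w => f w = 2)
      have hnon : {w | G.Adj v w ∧ f w = 2}.Nonempty := by
        rw [← Set.ncard_pos (Set.toFinite _)] at *; omega
      obtain ⟨w, hvw, hw2⟩ := hnon
      have hcard2 := h3 w (by omega)
      have hnon2 : {x | G.Adj w x ∧ f x = 2}.Nonempty := by
        rw [← Set.ncard_pos (Set.toFinite _)] at *; omega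
      obtain ⟨x, hwx, hx2⟩ := hnon2
      have h1w : (G.neighborFinset w).card ≤ 1 := by
        rw [SimpleGraph.card_neighborFinset_eq_degree, hreg w]
      have : x = v := Finset.card_le_one.mp h1w x
        ((SimpleGraph.mem_neighborFinset G w x).mpr hwx) v
        ((SimpleGraph.mem_neighborFinset G w v).mpr hvw.symm)
      rw [this, hv1] at hx2
      omega
    refine le_antisymm (Nat.sInf_le hmem) (le_csInf ⟨_, hmem⟩ ?_)
    rintro m ⟨f, hf, rfl⟩
    have h2 : ∀ u, f u = 2 := hall f hf
    calc 2 * Fintype.card V = ∑ _u : V, 2 := by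
          simp [Finset.sum_const, mul_comm, Finset.card_univ]
      _ = ∑ u, f u := Finset.sum_congr rfl (fun u _ => (h2 u).symm)
      _ ≤ ∑ u, f u := le_refl _
end

section
/- A graph G with δ(G) ≥ k−1 satisfies γ_{×kR}(G) = 2γ_{×k}(G) (i.e., G is a k-tuple Roman graph) if and only if G has a minimum-weight Roman k-tuple dominating function f = (V_0, V_1, V_2) with V_1 = ∅. -/
open Finset

lemma univ_ktds {V : Type*} [Fintype V] (G : SimpleGraph V) (k : ℕ)
    (hδ : ∀ v : V, k - 1 ≤ (G.neighborSet v).ncard) :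
    IsKTupleDomSet G k Set.univ := by
  intro v
  have h1 : {w ∈ (Set.univ : Set V) | w = v ∨ G.Adj v w} = insert v (G.neighborSet v) := by
    ext w; simp [SimpleGraph.neighborSet]
  rw [h1, Set.ncard_insert_of_notMem (by simp) (Set.toFinite _)]
  have := hδ v; omega

lemma rktdf_of_ktds {V : Type*} [Fintype V] (G : SimpleGraph V) (k : ℕ) (S : Set V)
    [DecidablePred (· ∈ S)] (hS : IsKTupleDomSet G k S) :
    IsRkTDF G k (fun v => if v ∈ S then 2 else 0) := by
  classical
  refine ⟨fun v => by dsimp; split <;> omega, ?_, ?_⟩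
  · intro v hv
    dsimp at hv
    have hvS : v ∉ S := by by_contra h; simp [h] at hv
    refine le_trans (hS v) (Set.ncard_le_ncard ?_ (Set.toFinite _))
    rintro w ⟨hwS, rfl | hadj⟩
    · exact absurd hwS hvS
    · exact ⟨hadj, by simp [hwS]⟩
  · intro v _
    have hsub : {w ∈ S | w = v ∨ G.Adj v w} \ {v} ⊆
        {w | G.Adj v w ∧ (fun u => if u ∈ S then 2 else 0) w = 2} := by
      rintro w ⟨⟨hwS, rfl | hadj⟩, hwv⟩
      · exact absurd rfl hwv
      · exact ⟨hadj, by simp [hwS]⟩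
    have h2 := Set.ncard_le_ncard hsub (Set.toFinite _)
    have h3 : {w ∈ S | w = v ∨ G.Adj v w}.ncard ≤
        ({w ∈ S | w = v ∨ G.Adj v w} \ {v}).ncard + 1 := by
      have : {w ∈ S | w = v ∨ G.Adj v w} ⊆ insert v ({w ∈ S | w = v ∨ G.Adj v w} \ {v}) := by
        intro w hw
        by_cases hwv : w = v
        · exact hwv ▸ Set.mem_insert _ _
        · exact Set.mem_insert_of_mem _ ⟨hw, hwv⟩
      calc {w ∈ S | w = v ∨ G.Adj v w}.ncard
          ≤ (insert v ({w ∈ S | w = v ∨ G.Adj v w} \ {v})).ncard :=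
            Set.ncard_le_ncard this (Set.toFinite _)
        _ ≤ _ := Set.ncard_insert_le _ _
    have := hS v
    omega

lemma ktds_of_rktdf {V : Type*} [Fintype V] (G : SimpleGraph V) (k : ℕ) (f : V → ℕ)
    (hf : IsRkTDF G k f) (h1 : ∀ v, f v ≠ 1) :
    IsKTupleDomSet G k {v | f v = 2} := by
  intro v
  by_cases hv : f v = 2
  · have hk := hf.2.2 v (by omega)
    have hsub : insert v {w | G.Adj v w ∧ f w = 2} ⊆
        {w ∈ {u | f u = 2} | w = v ∨ G.Adj v w} := by
      rintro w (rfl | ⟨hadj, hw2⟩)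
      · exact ⟨hv, Or.inl rfl⟩
      · exact ⟨hw2, Or.inr hadj⟩
    have hcard := Set.ncard_le_ncard hsub (Set.toFinite _)
    rw [Set.ncard_insert_of_notMem (by simp) (Set.toFinite _)] at hcard
    omega
  · have hv0 : f v = 0 := by have := hf.1 v; have := h1 v; omega
    refine le_trans (hf.2.1 v hv0) (Set.ncard_le_ncard ?_ (Set.toFinite _))
    rintro w ⟨hadj, hw2⟩
    exact ⟨hw2, Or.inr hadj⟩

lemma sum_ite_two {V : Type*} [Fintype V] (S : Set V) [DecidablePred (· ∈ S)] :
    ∑ v, (if v ∈ S then 2 else 0) = 2 * S.ncard := by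
  rw [Set.ncard_eq_toFinset_card', Finset.sum_ite, Finset.sum_const, Finset.sum_const]
  simp [Set.toFinset, mul_comm]

lemma sum_eq_two_mul {V : Type*} [Fintype V] (f : V → ℕ) (h2 : ∀ v, f v ≤ 2)
    (h1 : ∀ v, f v ≠ 1) : ∑ v, f v = 2 * {v | f v = 2}.ncard := by
  classical
  have hfeq : ∀ v, f v = if f v = 2 then 2 else 0 := by
    intro v; have := h2 v; have := h1 v; split <;> omega
  calc ∑ v, f v = ∑ v, (if v ∈ {u | f u = 2} then 2 else 0) := by
        apply Finset.sum_congr rfl; intro v _; simpa using hfeq v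
    _ = 2 * {v | f v = 2}.ncard := sum_ite_two _

theorem stmt7 {V : Type*} [Fintype V] (G : SimpleGraph V) (k : ℕ)
    (hδ : ∀ v : V, k - 1 ≤ (G.neighborSet v).ncard) :
    romanKTDN G k = 2 * kTupleDomNum G k ↔
      ∃ f : V → ℕ, IsRkTDF G k f ∧ ∑ v, f v = romanKTDN G k ∧ ∀ v, f v ≠ 1 := by
  classical
  have hne : {n | ∃ S : Set V, IsKTupleDomSet G k S ∧ S.ncard = n}.Nonempty :=
    ⟨(Set.univ : Set V).ncard, Set.univ, univ_ktds G k hδ, rfl⟩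
  obtain ⟨S, hS, hScard⟩ := Nat.sInf_mem hne
  letI : DecidablePred (· ∈ S) := Classical.decPred _
  rw [show sInf {n | ∃ S : Set V, IsKTupleDomSet G k S ∧ S.ncard = n} = kTupleDomNum G k
    from rfl] at hScard
  have hle : romanKTDN G k ≤ 2 * kTupleDomNum G k := by
    apply Nat.sInf_le
    exact ⟨fun v => if v ∈ S then 2 else 0, rktdf_of_ktds G k S hS,
      by rw [sum_ite_two, hScard]⟩
  constructor
  · intro h
    refine ⟨fun v => if v ∈ S then 2 else 0, rktdf_of_ktds G k S hS, ?_, ?_⟩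
    · rw [sum_ite_two, hScard, h]
    · intro v; dsimp; split <;> omega
  · rintro ⟨f, hf, hsum, h1⟩
    have hTk : kTupleDomNum G k ≤ {v | f v = 2}.ncard :=
      Nat.sInf_le ⟨{v | f v = 2}, ktds_of_rktdf G k f hf h1, rfl⟩
    have hsum2 := sum_eq_two_mul f hf.1 h1
    omega
end

section
/- Let f = (V_0, V_1, V_2) be any minimum-weight Roman k-tuple dominating function on a graph G with δ(G) ≥ k−1. Then the subgraph of G induced by V_1 has maximum degree at most 1. -/
open Finset

theorem stmt10 {V : Type*} [Fintype V] (G : SimpleGraph V) (k : ℕ)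
    (hδ : ∀ v : V, k - 1 ≤ (G.neighborSet v).ncard)
    (f : V → ℕ) (hf : IsRkTDF G k f) (hmin : ∑ v, f v = romanKTDN G k) :
    ∀ v : V, f v = 1 → {w | G.Adj v w ∧ f w = 1}.ncard ≤ 1 := by
  classical
  intro v hv
  by_contra hc
  push_neg at hc
  set A : Set V := {w | G.Adj v w ∧ f w = 1} with hA
  set g : V → ℕ := fun u => if u = v then 2 else if u ∈ A then 0 else f u with hg
  obtain ⟨hf2, hf0, hf1⟩ := hf
  have hvA : v ∉ A := fun h => G.loopless.irrefl v h.1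
  have hfg2 : ∀ w, f w = 2 → g w = 2 := by
    intro w hw
    simp only [hg]
    rw [if_neg, if_neg]
    · exact hw
    · rintro ⟨_, h1⟩; omega
    · rintro rfl; omega
  have hsub : ∀ u : V, {w | G.Adj u w ∧ f w = 2} ⊆ {w | G.Adj u w ∧ g w = 2} := by
    rintro u w ⟨h1, h2⟩; exact ⟨h1, hfg2 w h2⟩
  have hle : ∀ u : V, {w | G.Adj u w ∧ f w = 2}.ncard ≤ {w | G.Adj u w ∧ g w = 2}.ncard :=
    fun u => Set.ncard_le_ncard (hsub u) (Set.toFinite _)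
  have hgv : g v = 2 := by simp [hg]
  have hgRkTDF : IsRkTDF G k g := by
    refine ⟨?_, ?_, ?_⟩
    · intro u
      simp only [hg]
      split_ifs with h1 h2
      · exact le_refl 2
      · omega
      · exact hf2 u
    · intro u hu
      by_cases huv : u = v
      · exfalso; rw [huv, hgv] at hu; omega
      by_cases huA : u ∈ A
      · have hAdj : G.Adj u v := (huA.1).symm
        have hk1 : k - 1 ≤ {w | G.Adj u w ∧ f w = 2}.ncard :=
          hf1 u (by rw [huA.2]; omega)
        have hvin : v ∈ {w | G.Adj u w ∧ g w = 2} := ⟨hAdj, hgv⟩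
        have hvnot : v ∉ {w | G.Adj u w ∧ f w = 2} := by
          rintro ⟨-, h2⟩; omega
        have hins : insert v {w | G.Adj u w ∧ f w = 2} ⊆ {w | G.Adj u w ∧ g w = 2} := by
          rw [Set.insert_subset_iff]; exact ⟨hvin, hsub u⟩
        have hcard := Set.ncard_insert_of_notMem hvnot (Set.toFinite _)
        have h2 : (insert v {w | G.Adj u w ∧ f w = 2}).ncard ≤
            {w | G.Adj u w ∧ g w = 2}.ncard :=
          Set.ncard_le_ncard hins (Set.toFinite _)
        omega
      · have hfu : f u = 0 := by
          simp only [hg] at hu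
          rw [if_neg huv, if_neg huA] at hu
          exact hu
        exact (hf0 u hfu).trans (hle u)
    · intro u hu
      by_cases huv : u = v
      · subst huv
        exact (hf1 u (by omega)).trans (hle u)
      by_cases huA : u ∈ A
      · exfalso; apply hu; simp only [hg]; rw [if_neg huv, if_pos huA]
      · have hfu : f u ≠ 0 := by
          simp only [hg] at hu
          rw [if_neg huv, if_neg huA] at hu
          exact hu
        exact (hf1 u hfu).trans (hle u)
  have hmem : (∑ u, g u) ∈ {n | ∃ f : V → ℕ, IsRkTDF G k f ∧ ∑ v, f v = n} :=
    ⟨g, hgRkTDF, rfl⟩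
  have hInf : romanKTDN G k ≤ ∑ u, g u := Nat.sInf_le hmem
  -- now show ∑ g < ∑ f
  set T : Finset V := A.toFinset with hT
  have hmT : A.ncard = T.card := Set.ncard_eq_toFinset_card' A
  have hvT : v ∉ T := by simpa [hT] using hvA
  set s : Finset V := insert v T with hs
  have h1 : ∑ u ∈ univ \ s, f u + ∑ u ∈ s, f u = ∑ u, f u :=
    Finset.sum_sdiff (Finset.subset_univ s)
  have h2 : ∑ u ∈ univ \ s, g u + ∑ u ∈ s, g u = ∑ u, g u :=
    Finset.sum_sdiff (Finset.subset_univ s)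
  have h3 : ∑ u ∈ univ \ s, g u = ∑ u ∈ univ \ s, f u := by
    apply Finset.sum_congr rfl
    intro u hu
    simp only [Finset.mem_sdiff, hs, Finset.mem_insert] at hu
    push_neg at hu
    have huA : u ∉ A := by
      intro h; exact hu.2.2 (by simpa [hT] using h)
    simp only [hg]
    rw [if_neg hu.2.1, if_neg huA]
  have h4 : ∑ u ∈ s, f u = 1 + T.card := by
    rw [hs, Finset.sum_insert hvT, hv]
    congr 1
    rw [Finset.sum_congr rfl (fun u hu => ?_), Finset.sum_const, smul_eq_mul, mul_one]
    exact (by simpa [hT] using hu : u ∈ A).2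
  have h5 : ∑ u ∈ s, g u = 2 := by
    rw [hs, Finset.sum_insert hvT, hgv]
    have : ∑ u ∈ T, g u = 0 := by
      apply Finset.sum_eq_zero
      intro u hu
      have huA : u ∈ A := by simpa [hT] using hu
      have huv : u ≠ v := fun h => hvA (h ▸ huA)
      simp only [hg]; rw [if_neg huv, if_pos huA]
    omega
  omega
end

section
/- Let f = (V_0, V_1, V_2) be any minimum-weight Roman k-tuple dominating function on a graph G with δ(G) ≥ k−1. Then every vertex of V_1 is adjacent to precisely k−1 vertices of V_2. -/
open Finset

theorem stmt11 {V : Type*} [Fintype V] (G : SimpleGraph V) (k : ℕ)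
    (hδ : ∀ v : V, k - 1 ≤ (G.neighborSet v).ncard)
    (f : V → ℕ) (hf : IsRkTDF G k f) (hmin : ∑ v, f v = romanKTDN G k) :
    ∀ v : V, f v = 1 → {w | G.Adj v w ∧ f w = 2}.ncard = k - 1 := by
  classical
  intro v hv
  by_contra hne
  have hge : k - 1 ≤ {w | G.Adj v w ∧ f w = 2}.ncard := hf.2.2 v (by omega)
  have hk : k ≤ {w | G.Adj v w ∧ f w = 2}.ncard := by omega
  set g : V → ℕ := Function.update f v 0 with hg
  have hsame : ∀ u, {w | G.Adj u w ∧ g w = 2} = {w | G.Adj u w ∧ f w = 2} := by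
    intro u
    ext w
    simp only [Set.mem_setOf_eq, hg]
    by_cases hw : w = v
    · subst hw; simp [hv]
    · rw [Function.update_of_ne hw]
  have hgR : IsRkTDF G k g := by
    refine ⟨?_, ?_, ?_⟩
    · intro u; by_cases hu : u = v
      · subst hu; simp [hg]
      · rw [hg, Function.update_of_ne hu]; exact hf.1 u
    · intro u hu
      rw [hsame u]
      by_cases huv : u = v
      · subst huv; exact hk
      · exact hf.2.1 u (by rwa [hg, Function.update_of_ne huv] at hu)
    · intro u hu
      rw [hsame u]
      by_cases huv : u = v
      · subst huv; exact hge
      · exact hf.2.2 u (by rwa [hg, Function.update_of_ne huv] at hu)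
  have hsum : ∑ w, g w + 1 = ∑ w, f w := by
    rw [hg, Finset.sum_update_of_mem (Finset.mem_univ v)]
    have h2 : ∑ x ∈ Finset.univ.erase v, f x + f v = ∑ w, f w :=
      Finset.sum_erase_add _ _ (Finset.mem_univ v)
    rw [Finset.sdiff_singleton_eq_erase]
    omega
  have hle : romanKTDN G k ≤ ∑ w, g w := Nat.sInf_le ⟨g, hgR, rfl⟩
  omega
end

section
/- Let f = (V_0, V_1, V_2) be any minimum-weight Roman k-tuple dominating function on a graph G with δ(G) ≥ k−1. Then every vertex of V_0 is adjacent to at most two vertices of V_1. -/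
open Finset

theorem stmt12 {V : Type*} [Fintype V] (G : SimpleGraph V) (k : ℕ)
    (hδ : ∀ v : V, k - 1 ≤ (G.neighborSet v).ncard)
    (f : V → ℕ) (hf : IsRkTDF G k f) (hmin : ∑ v, f v = romanKTDN G k) :
    ∀ v : V, f v = 0 → {w | G.Adj v w ∧ f w = 1}.ncard ≤ 2 := by
  classical
  intro v hv
  by_contra hcon
  push_neg at hcon
  obtain ⟨h2, h0, h1⟩ := hf
  set A : Set V := {w | G.Adj v w ∧ f w = 1} with hA
  set g : V → ℕ := fun w => if w = v then 2 else if w ∈ A then 0 else f w with hg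
  have hvA : v ∉ A := fun h => G.irrefl h.1
  have hmono : ∀ u, {w | G.Adj u w ∧ f w = 2} ⊆ {w | G.Adj u w ∧ g w = 2} := by
    intro u w hw
    refine ⟨hw.1, ?_⟩
    simp only [hg]
    rcases eq_or_ne w v with rfl | hwv
    · simp
    · rw [if_neg hwv, if_neg]
      · exact hw.2
      · rintro ⟨-, h1'⟩
        have := hw.2; omega
  have hcard : ∀ u, {w | G.Adj u w ∧ f w = 2}.ncard ≤ {w | G.Adj u w ∧ g w = 2}.ncard :=
    fun u => Set.ncard_le_ncard (hmono u) (Set.toFinite _)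
  have hgR : IsRkTDF G k g := by
    refine ⟨?_, ?_, ?_⟩
    · intro w
      simp only [hg]
      split_ifs with h h'
      · omega
      · omega
      · exact h2 w
    · intro u hu
      simp only [hg] at hu
      split_ifs at hu with h h'
      · -- u ∈ A
        have hadj : G.Adj u v := (h'.1).symm
        have hvset : v ∈ {w | G.Adj u w ∧ g w = 2} := ⟨hadj, by simp [hg]⟩
        have hvold : v ∉ {w | G.Adj u w ∧ f w = 2} := by
          rintro ⟨-, hv2⟩; omega
        have hsub : insert v {w | G.Adj u w ∧ f w = 2} ⊆ {w | G.Adj u w ∧ g w = 2} := by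
          rw [Set.insert_subset_iff]; exact ⟨hvset, hmono u⟩
        have hle := Set.ncard_le_ncard hsub (Set.toFinite _)
        rw [Set.ncard_insert_of_notMem hvold (Set.toFinite _)] at hle
        have h1u := h1 u (by rw [h'.2]; omega)
        omega
      · exact le_trans (h0 u hu) (hcard u)
    · intro u hu
      rcases eq_or_ne u v with rfl | huv
      · exact le_trans (Nat.sub_le k 1) (le_trans (h0 u hv) (hcard u))
      · simp only [hg, if_neg huv] at hu
        split_ifs at hu with h
        · omega
        · exact le_trans (h1 u hu) (hcard u)
  have hsum : ∑ w, g w + A.ncard = ∑ w, f w + 2 := by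
    have hAn : A.ncard = ∑ w, (if w ∈ A.toFinset then 1 else 0) := by
      rw [Finset.sum_ite_mem, Finset.univ_inter, Set.ncard_eq_toFinset_card' A,
        Finset.card_eq_sum_ones]
    have h2' : (2 : ℕ) = ∑ w, (if w = v then 2 else 0) := by
      simp
    rw [hAn, h2', ← Finset.sum_add_distrib, ← Finset.sum_add_distrib]
    apply Finset.sum_congr rfl
    intro w _
    simp only [hg, Set.mem_toFinset]
    rcases eq_or_ne w v with rfl | hwv
    · simp [hvA, hv]
    · by_cases hwA : w ∈ A
      · simp [hwA, hwA.2, hwv]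
      · simp [hwA, hwv]
  have hAcard : 3 ≤ A.ncard := hcon
  have hlt : ∑ w, g w < ∑ w, f w := by omega
  have hle : romanKTDN G k ≤ ∑ w, g w := Nat.sInf_le ⟨g, hgR, rfl⟩
  omega
end

section
/- For the cycle C_n of order n ≥ 3, the Roman 2-tuple domination number equals 2⌈2n/3⌉. -/
open Finset

namespace Stmt17Aux

open SimpleGraph
open Fin.CommRing

lemma two_ne (m : ℕ) : (2 : Fin (m+3)) ≠ 0 := by simp [Fin.ext_iff, Nat.mod_eq_of_lt (show 2 < m+3 by omega)]

lemma sub_ne_add (m : ℕ) (v : Fin (m+3)) : v - 1 ≠ v + 1 := by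
  intro h
  exact two_ne m (by linear_combination -h)

lemma N2_subset (m : ℕ) (f : Fin (m+3) → ℕ) (v : Fin (m+3)) :
    {w | (cycleGraph (m+3)).Adj v w ∧ f w = 2} ⊆ {v - 1, v + 1} := by
  rintro w ⟨hadj, -⟩
  rw [cycleGraph_adj] at hadj
  simp only [Set.mem_insert_iff, Set.mem_singleton_iff]
  rcases hadj with h | h
  · left; linear_combination -h
  · right; linear_combination h

lemma adj_sub (m : ℕ) (v : Fin (m+3)) : (cycleGraph (m+3)).Adj v (v - 1) := by
  rw [cycleGraph_adj]; left; ring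

lemma adj_add (m : ℕ) (v : Fin (m+3)) : (cycleGraph (m+3)).Adj v (v + 1) := by
  rw [cycleGraph_adj]; right; ring

lemma ncard_two (m : ℕ) (f : Fin (m+3) → ℕ) (v : Fin (m+3))
    (h : 2 ≤ {w | (cycleGraph (m+3)).Adj v w ∧ f w = 2}.ncard) :
    f (v - 1) = 2 ∧ f (v + 1) = 2 := by
  have hsub := N2_subset m f v
  have heq : {w | (cycleGraph (m+3)).Adj v w ∧ f w = 2} = {v - 1, v + 1} := by
    apply Set.eq_of_subset_of_ncard_le hsub _ (Set.toFinite _)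
    rwa [Set.ncard_pair (sub_ne_add m v)]
  constructor
  · exact (heq ▸ (Set.mem_insert _ _) : (v-1) ∈ {w | (cycleGraph (m+3)).Adj v w ∧ f w = 2}).2
  · exact (heq ▸ (Set.mem_insert_of_mem _ rfl) :
      (v+1) ∈ {w | (cycleGraph (m+3)).Adj v w ∧ f w = 2}).2

lemma ncard_one (m : ℕ) (f : Fin (m+3) → ℕ) (v : Fin (m+3))
    (h : 1 ≤ {w | (cycleGraph (m+3)).Adj v w ∧ f w = 2}.ncard) :
    f (v - 1) = 2 ∨ f (v + 1) = 2 := by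
  have hne : {w | (cycleGraph (m+3)).Adj v w ∧ f w = 2}.Nonempty := by
    rw [← Set.ncard_pos (Set.toFinite _)] at *
    omega
  obtain ⟨w, hw⟩ := hne
  rcases N2_subset m f v hw with h1 | h1
  · left; rw [← h1]; exact hw.2
  · right; rw [← h1]; exact hw.2

lemma le_ncard_two (m : ℕ) (f : Fin (m+3) → ℕ) (v : Fin (m+3))
    (h1 : f (v - 1) = 2) (h2 : f (v + 1) = 2) :
    2 ≤ {w | (cycleGraph (m+3)).Adj v w ∧ f w = 2}.ncard := by
  have hsub : ({v - 1, v + 1} : Set (Fin (m+3))) ⊆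
      {w | (cycleGraph (m+3)).Adj v w ∧ f w = 2} := by
    rintro w (rfl | rfl)
    · exact ⟨adj_sub m v, h1⟩
    · exact ⟨adj_add m v, h2⟩
  calc 2 = ({v - 1, v + 1} : Set (Fin (m+3))).ncard := (Set.ncard_pair (sub_ne_add m v)).symm
    _ ≤ _ := Set.ncard_le_ncard hsub (Set.toFinite _)

lemma le_ncard_one (m : ℕ) (f : Fin (m+3) → ℕ) (v : Fin (m+3))
    (h : f (v - 1) = 2 ∨ f (v + 1) = 2) :
    1 ≤ {w | (cycleGraph (m+3)).Adj v w ∧ f w = 2}.ncard := by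
  rw [Nat.one_le_iff_ne_zero, ← Nat.pos_iff_ne_zero, Set.ncard_pos (Set.toFinite _)]
  rcases h with h | h
  · exact ⟨v - 1, adj_sub m v, h⟩
  · exact ⟨v + 1, adj_add m v, h⟩

lemma myh0both (m : ℕ) (f : Fin (m+3) → ℕ) (hf : IsRkTDF (cycleGraph (m+3)) 2 f)
    (v : Fin (m+3)) (h : f v = 0) : f (v - 1) = 2 ∧ f (v + 1) = 2 :=
  ncard_two m f v (hf.2.1 v h)

lemma myhall (m : ℕ) (f : Fin (m+3) → ℕ) (hf : IsRkTDF (cycleGraph (m+3)) 2 f)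
    (v : Fin (m+3)) : f (v - 1) = 2 ∨ f (v + 1) = 2 := by
  rcases eq_or_ne (f v) 0 with h | h
  · exact Or.inl (myh0both m f hf v h).1
  · exact ncard_one m f v (by have := hf.2.2 v h; omega)

lemma packing (m : ℕ) (S : Finset (Fin (m+3)))
    (hsep1 : ∀ s ∈ S, s + 1 ∉ S) (hsep2 : ∀ s ∈ S, s + 2 ∉ S) :
    3 * S.card ≤ m + 3 := by
  classical
  have hone : (1 : Fin (m+3)) ≠ 0 := by simp [Fin.ext_iff]
  have htwo : (2 : Fin (m+3)) ≠ 0 := by simp [Fin.ext_iff, Nat.mod_eq_of_lt (show 2 < m+3 by omega)]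
  set U := S.biUnion (fun s => ({s, s + 1, s + 2} : Finset (Fin (m+3)))) with hU
  have c1 : ∀ u v : Fin (m+3), u ∈ S → v ∈ S → u ≠ v + 1 := by
    intro u v hu hv h
    exact hsep1 v hv (h ▸ hu)
  have c2 : ∀ u v : Fin (m+3), u ∈ S → v ∈ S → u ≠ v + 2 := by
    intro u v hu hv h
    exact hsep2 v hv (h ▸ hu)
  have hdisj : ∀ a ∈ S, ∀ b ∈ S, a ≠ b →
      Disjoint ({a, a + 1, a + 2} : Finset (Fin (m+3))) {b, b + 1, b + 2} := by
    intro a ha b hb hne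
    rw [Finset.disjoint_left]
    intro x hx hx'
    simp only [Finset.mem_insert, Finset.mem_singleton] at hx hx'
    rcases hx with rfl | rfl | rfl
    · rcases hx' with h | h | h
      · exact hne h
      · exact c1 x b ha hb h
      · exact c2 x b ha hb h
    · rcases hx' with h | h | h
      · exact c1 b a hb ha h.symm
      · exact hne (by linear_combination h)
      · exact c1 a b ha hb (by linear_combination h)
    · rcases hx' with h | h | h
      · exact c2 b a hb ha h.symm
      · exact c1 b a hb ha (show b = a + 1 by linear_combination -h)
      · exact hne (by linear_combination h)
  have hcard3 : ∀ s : Fin (m+3), ({s, s + 1, s + 2} : Finset (Fin (m+3))).card = 3 := by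
    intro s
    rw [Finset.card_insert_of_notMem, Finset.card_insert_of_notMem, Finset.card_singleton]
    · simp only [Finset.mem_singleton]
      intro h
      exact hone (by linear_combination -h)
    · simp only [Finset.mem_insert, Finset.mem_singleton]
      rintro (h | h)
      · exact hone (by linear_combination -h)
      · exact htwo (by linear_combination -h)
  have h1 : U.card = 3 * S.card := by
    rw [hU, Finset.card_biUnion hdisj]
    simp only [hcard3]
    rw [Finset.sum_const, smul_eq_mul, Nat.mul_comm]
  have h2 : U.card ≤ m + 3 := by simpa using Finset.card_le_univ U
  omega

theorem lower (m : ℕ) (f : Fin (m+3) → ℕ) (hf : IsRkTDF (cycleGraph (m+3)) 2 f) :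
    2 * ((m+3) - (m+3)/3) ≤ ∑ v, f v := by
  classical
  have myhle : ∀ v, f v ≤ 2 := hf.1
  set S : Finset (Fin (m+3)) := univ.filter (fun s => f s ≠ 2 ∧ f (s - 1) = 2) with hS
  have hmemS : ∀ s : Fin (m+3), s ∈ S ↔ f s ≠ 2 ∧ f (s - 1) = 2 := by
    intro s; simp [hS]
  have hsep1 : ∀ s ∈ S, s + 1 ∉ S := by
    intro s hs h1
    rw [hmemS] at hs h1
    rw [show s + 1 - 1 = s by ring] at h1
    exact hs.1 h1.2
  have hsep2 : ∀ s ∈ S, s + 2 ∉ S := by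
    intro s hs h2
    rw [hmemS] at hs h2
    rw [show s + 2 - 1 = s + 1 by ring] at h2
    rcases myhall m f hf (s + 1) with h | h
    · rw [show s + 1 - 1 = s by ring] at h; exact hs.1 h
    · rw [show s + 1 + 1 = s + 2 by ring] at h; exact h2.1 h
  have hpack := packing m S hsep1 hsep2
  set T : Finset (Fin (m+3)) := univ.filter (fun v => f v ≠ 2) with hT
  have hmemT : ∀ v : Fin (m+3), v ∈ T ↔ f v ≠ 2 := by intro v; simp [hT]
  have hST : S ⊆ T := by
    intro s hs
    rw [hmemT]; exact ((hmemS s).1 hs).1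
  have key1 : ∀ v ∈ T \ S, f v = 1 ∧ f (v - 1) = 1 ∧ v - 1 ∈ S := by
    intro v hv
    rw [Finset.mem_sdiff, hmemT, hmemS] at hv
    obtain ⟨hv2, hvS⟩ := hv
    have hvm : f (v - 1) ≠ 2 := fun h => hvS ⟨hv2, h⟩
    have hfv : f v = 1 := by
      have := myhle v
      rcases Nat.lt_or_ge (f v) 1 with h | h
      · exfalso; exact hvm (myh0both m f hf v (by omega)).1
      · omega
    have hfvm : f (v - 1) = 1 := by
      have := myhle (v - 1)
      rcases Nat.lt_or_ge (f (v - 1)) 1 with h | h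
      · exfalso
        have := (myh0both m f hf (v - 1) (by omega)).2
        rw [show v - 1 + 1 = v by ring] at this
        exact hv2 this
      · omega
    refine ⟨hfv, hfvm, ?_⟩
    rw [hmemS]
    refine ⟨hvm, ?_⟩
    rcases myhall m f hf (v - 1) with h | h
    · exact h
    · rw [show v - 1 + 1 = v by ring] at h; exact absurd h hv2
  set I : Finset (Fin (m+3)) := (T \ S).image (fun v => v - 1) with hI
  have hinj : Function.Injective (fun v : Fin (m+3) => v - 1) := by
    intro a b h
    simpa using sub_left_injective h
  have hIcard : I.card = (T \ S).card := Finset.card_image_of_injective _ hinj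
  have hIS : I ⊆ S := by
    intro s hs
    rw [hI, Finset.mem_image] at hs
    obtain ⟨v, hv, rfl⟩ := hs
    exact (key1 v hv).2.2
  have hIone : ∀ s ∈ I, f s = 1 := by
    intro s hs
    rw [hI, Finset.mem_image] at hs
    obtain ⟨v, hv, rfl⟩ := hs
    exact (key1 v hv).2.1
  have e1 : ∑ v ∈ T, (2 - f v) = ∑ v, (2 - f v) := by
    apply Finset.sum_subset (Finset.subset_univ T)
    intro v _ hv
    rw [hmemT] at hv
    push_neg at hv
    omega
  have e2 : ∑ v ∈ T \ S, (2 - f v) + ∑ v ∈ S, (2 - f v) = ∑ v ∈ T, (2 - f v) :=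
    Finset.sum_sdiff hST
  have e3 : ∑ v ∈ T \ S, (2 - f v) = (T \ S).card := by
    rw [Finset.sum_congr rfl (fun v hv => by rw [(key1 v hv).1])]
    simp
  have e4 : ∑ v ∈ S \ I, (2 - f v) + ∑ v ∈ I, (2 - f v) = ∑ v ∈ S, (2 - f v) :=
    Finset.sum_sdiff hIS
  have e5 : ∑ v ∈ I, (2 - f v) = I.card := by
    rw [Finset.sum_congr rfl (fun v hv => by rw [hIone v hv])]
    simp
  have e6 : ∑ v ∈ S \ I, (2 - f v) ≤ 2 * (S.card - I.card) := by
    calc ∑ v ∈ S \ I, (2 - f v) ≤ ∑ v ∈ S \ I, 2 :=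
          Finset.sum_le_sum (fun v _ => by omega)
      _ = (S \ I).card * 2 := by rw [Finset.sum_const, smul_eq_mul]
      _ = 2 * (S.card - I.card) := by rw [Finset.card_sdiff_of_subset hIS]; ring
  have hIcard' : I.card ≤ S.card := Finset.card_le_card hIS
  have eA : ∑ v, (2 - f v) ≤ 2 * S.card := by omega
  have etot : ∑ v, f v + ∑ v, (2 - f v) = 2 * (m+3) := by
    rw [← Finset.sum_add_distrib]
    have hc : ∀ v : Fin (m+3), f v + (2 - f v) = 2 := fun v => by have := myhle v; omega
    rw [Finset.sum_congr rfl (fun v _ => hc v)]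
    simp [Nat.mul_comm]
  omega

def g (n : ℕ) (i : ℕ) : ℕ := if i % 3 = 2 ∧ i < 3 * (n / 3) then 0 else 2

def fup (m : ℕ) : Fin (m+3) → ℕ := fun v => g (m+3) v.val

lemma val_sub_one (m : ℕ) (v : Fin (m+3)) :
    ((v - 1 : Fin (m+3)) : ℕ) = if (v : ℕ) = 0 then m + 2 else (v : ℕ) - 1 := by
  rw [Fin.coe_sub_one]
  by_cases h : v = 0
  · simp [h]
  · rw [if_neg h, if_neg (show ¬((v : ℕ) = 0) from fun hc => h (Fin.ext hc))]

lemma val_add_one (m : ℕ) (v : Fin (m+3)) :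
    ((v + 1 : Fin (m+3)) : ℕ) = if (v : ℕ) = m + 2 then 0 else (v : ℕ) + 1 := by
  rw [Fin.val_add_one]
  by_cases h : v = Fin.last (m+2)
  · rw [if_pos h, if_pos]; rw [h]; rfl
  · rw [if_neg h, if_neg]
    intro hc
    exact h (Fin.ext hc)

lemma fup_isR (m : ℕ) : IsRkTDF (cycleGraph (m+3)) 2 (fup m) := by
  refine ⟨fun v => ?_, fun v hv => ?_, fun v hv => ?_⟩
  · unfold fup g; split <;> omega
  · have hv' : (v : ℕ) % 3 = 2 ∧ (v : ℕ) < 3 * ((m+3) / 3) := by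
      by_contra h
      unfold fup g at hv
      rw [if_neg h] at hv
      omega
    apply le_ncard_two m (fup m) v
    · unfold fup g
      rw [val_sub_one, if_neg (show ¬((v:ℕ) = 0) by omega), if_neg (by omega)]
    · unfold fup g
      rw [val_add_one]
      have hvlt := v.isLt
      by_cases h : (v : ℕ) = m + 2
      · rw [if_pos h, if_neg (by omega)]
      · rw [if_neg h, if_neg (by omega)]
  · apply le_ncard_one m (fup m) v
    have hvlt := v.isLt
    have hcond : ¬((v : ℕ) % 3 = 2 ∧ (v : ℕ) < 3 * ((m+3) / 3)) := by
      intro h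
      unfold fup g at hv
      rw [if_pos h] at hv
      exact hv rfl
    have hmod : (v : ℕ) % 3 = 0 ∨ (v : ℕ) % 3 = 1 := by omega
    rcases hmod with h3 | h3
    · right
      unfold fup g
      rw [val_add_one]
      by_cases h : (v : ℕ) = m + 2
      · rw [if_pos h, if_neg (by omega)]
      · rw [if_neg h, if_neg (by omega)]
    · left
      unfold fup g
      rw [val_sub_one, if_neg (show ¬((v:ℕ) = 0) by omega), if_neg (by omega)]

lemma sum_g (j : ℕ) :
    ∑ i ∈ Finset.range (3 * j), (if i % 3 = 2 then 0 else 2) = 4 * j := by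
  induction j with
  | zero => simp
  | succ k ih =>
    rw [show 3 * (k + 1) = (3 * k + 1) + 1 + 1 by ring]
    rw [Finset.sum_range_succ, Finset.sum_range_succ, Finset.sum_range_succ, ih]
    rw [show (3 * k) % 3 = 0 by omega, show (3 * k + 1) % 3 = 1 by omega,
      show (3 * k + 1 + 1) % 3 = 2 by omega]
    norm_num
    ring

lemma fup_sum (m : ℕ) : ∑ v, fup m v = 2 * ((m+3) - (m+3)/3) := by
  have h1 : ∑ v, fup m v = ∑ i ∈ Finset.range (m+3), g (m+3) i :=
    Fin.sum_univ_eq_sum_range (fun i => g (m+3) i) (m+3)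
  set q := (m+3)/3 with hq
  have hgq : ∑ i ∈ Finset.range (3 * q), g (m+3) i = 4 * q := by
    rw [Finset.sum_congr rfl (fun i hi => ?_), sum_g q]
    rw [Finset.mem_range] at hi
    unfold g
    by_cases h : i % 3 = 2
    · rw [if_pos ⟨h, by omega⟩, if_pos h]
    · rw [if_neg (by tauto), if_neg h]
  have split := Finset.sum_Ico_consecutive (fun i => g (m+3) i)
    (Nat.zero_le (3*q)) (show 3*q ≤ m+3 by omega)
  have hrest : ∑ i ∈ Finset.Ico (3*q) (m+3), g (m+3) i = 2 * ((m+3) - 3*q) := by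
    have hc : ∀ i ∈ Finset.Ico (3*q) (m+3), g (m+3) i = 2 := by
      intro i hi
      rw [Finset.mem_Ico] at hi
      unfold g
      rw [if_neg (by omega)]
    rw [Finset.sum_congr rfl hc, Finset.sum_const, Nat.card_Ico, smul_eq_mul, Nat.mul_comm]
  rw [h1, Finset.range_eq_Ico, ← split, ← Finset.range_eq_Ico, hgq, hrest]
  omega

end Stmt17Aux

theorem stmt17 (n : ℕ) (hn : 3 ≤ n) :
    (romanKTDN (SimpleGraph.cycleGraph n) 2 : ℤ) = 2 * ⌈(2 * n : ℚ) / 3⌉ := by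
  obtain ⟨m, rfl⟩ : ∃ m, n = m + 3 := ⟨n - 3, by omega⟩
  have hval : romanKTDN (SimpleGraph.cycleGraph (m+3)) 2 = 2 * ((m+3) - (m+3)/3) := by
    apply le_antisymm
    · exact Nat.sInf_le ⟨Stmt17Aux.fup m, Stmt17Aux.fup_isR m, Stmt17Aux.fup_sum m⟩
    · refine le_csInf ?_ ?_
      · exact ⟨∑ v, Stmt17Aux.fup m v, Stmt17Aux.fup m, Stmt17Aux.fup_isR m, rfl⟩
      · rintro b ⟨f, hf, rfl⟩
        exact Stmt17Aux.lower m f hf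
  rw [hval]
  have hle' : (m+3)/3 ≤ m+3 := Nat.div_le_self _ _
  have hceil : ⌈(2 * ((m+3:ℕ):ℚ)) / 3⌉ = ((m+3:ℕ):ℤ) - (((m+3)/3 : ℕ) : ℤ) := by
    rw [Int.ceil_eq_iff]
    constructor
    · rw [lt_div_iff₀ (by norm_num : (0:ℚ) < 3)]
      have hz : ((((m+3:ℕ):ℤ) - (((m+3)/3 : ℕ):ℤ)) - 1) * 3 < 2 * ((m+3:ℕ):ℤ) := by
        push_cast
        omega
      exact_mod_cast hz
    · rw [div_le_iff₀ (by norm_num : (0:ℚ) < 3)]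
      have hz : 2 * ((m+3:ℕ):ℤ) ≤ (((m+3:ℕ):ℤ) - (((m+3)/3 : ℕ):ℤ)) * 3 := by
        push_cast
        omega
      exact_mod_cast hz
  rw [hceil]
  push_cast [Nat.cast_sub hle']
  ring
end

section
/- For the wheel W_n of order n ≥ 4 (a cycle C_{n−1} plus a hub vertex adjacent to all cycle vertices), the Roman 2-tuple domination number equals ⌈2(n−1)/3⌉ + 2. -/
open Finset

/-- The wheel on m + 1 vertices: a cycle on m vertices together with a hub
(the vertex `none`) adjacent to all of them. -/
def wheel (m : ℕ) : SimpleGraph (Option (Fin m)) where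
  Adj x y :=
    match x, y with
    | none, none => False
    | none, some _ => True
    | some _, none => True
    | some i, some j => (SimpleGraph.cycleGraph m).Adj i j
  symm := by
    refine ⟨?_⟩
    rintro (_ | i) (_ | j) h
    · exact h
    · trivial
    · trivial
    · exact h.symm
  loopless := by
    refine ⟨?_⟩
    rintro (_ | i) h
    · exact h
    · exact SimpleGraph.irrefl _ h

section Aux

lemma ncard_eq_sum {α : Type*} [Fintype α] (p : α → Prop) [DecidablePred p] :
    {x | p x}.ncard = ∑ x, if p x then 1 else 0 := by
  rw [show {x | p x} = ↑(Finset.univ.filter p) from by ext x; simp]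
  rw [Set.ncard_coe_finset, Finset.card_filter]

lemma base_sum (M : ℕ) :
    ∑ a ∈ Finset.range M, (if a % 3 = 1 then 2 else 0) = 2 * ((M + 1) / 3) := by
  induction M with
  | zero => simp
  | succ M ih =>
    rw [Finset.sum_range_succ, ih]
    by_cases h : M % 3 = 1 <;> simp [h] <;> omega

variable {m : ℕ}

@[simp] lemma wheel_adj_some_some {i j : Fin m} :
    (wheel m).Adj (some i) (some j) ↔ (SimpleGraph.cycleGraph m).Adj i j := Iff.rfl

@[simp] lemma wheel_adj_some_none {i : Fin m} : (wheel m).Adj (some i) none := trivial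

@[simp] lemma wheel_adj_none_some {j : Fin m} : (wheel m).Adj none (some j) := trivial

@[simp] lemma wheel_not_adj_none_none : ¬ (wheel m).Adj (none : Option (Fin m)) none := id

/-- the cycle part of the optimal function -/
def gfun (m : ℕ) (i : Fin m) : ℕ :=
  if i.val % 3 = 1 then 2 else if m % 3 = 1 ∧ i.val = m - 1 then 1 else 0

lemma gfun_sum (m : ℕ) (hm : 3 ≤ m) : ∑ i, gfun m i = (2 * m + 2) / 3 := by
  have h1 : ∑ i : Fin m, gfun m i
      = ∑ a ∈ Finset.range m, ((if a % 3 = 1 then 2 else 0)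
        + (if a = m - 1 ∧ m % 3 = 1 then 1 else 0)) := by
    rw [← Fin.sum_univ_eq_sum_range]
    refine Finset.sum_congr rfl fun i _ => ?_
    unfold gfun
    split_ifs <;> omega
  rw [h1, Finset.sum_add_distrib, base_sum]
  have h2 : ∑ a ∈ Finset.range m, (if a = m - 1 ∧ m % 3 = 1 then 1 else 0)
      = if m % 3 = 1 then 1 else 0 := by
    by_cases h3 : m % 3 = 1
    · simp only [h3, and_true, if_true]
      rw [Finset.sum_ite_eq' (Finset.range m) (m-1) (fun _ => 1)]
      simp [Finset.mem_range]; omega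
    · simp [h3]
  rw [h2]; by_cases h3 : m % 3 = 1 <;> simp [h3] <;> omega

end Aux

section Upper

lemma ncard_ge_two {α : Type*} [Fintype α] {S : Set α} {x y : α} (hxy : x ≠ y)
    (hx : x ∈ S) (hy : y ∈ S) : 2 ≤ S.ncard := by
  calc 2 = ({x, y} : Set α).ncard := (Set.ncard_pair hxy).symm
    _ ≤ S.ncard := Set.ncard_le_ncard (by rintro w (rfl | rfl) <;> assumption) (Set.toFinite S)

lemma ncard_ge_one {α : Type*} [Fintype α] {S : Set α} {x : α} (hx : x ∈ S) : 1 ≤ S.ncard := by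
  calc 1 = ({x} : Set α).ncard := (Set.ncard_singleton x).symm
    _ ≤ S.ncard := Set.ncard_le_ncard (by rintro w rfl; assumption) (Set.toFinite S)

lemma upper (k : ℕ) :
    IsRkTDF (wheel (k+3)) 2 (fun v => v.elim 2 (gfun (k+3))) ∧
      ∑ v, (Option.elim v 2 (gfun (k+3))) = (2*(k+3)+2)/3 + 2 := by
  constructor
  · refine ⟨?_, ?_, ?_⟩
    · rintro (_ | i)
      · exact le_refl 2
      · show gfun (k+3) i ≤ 2
        unfold gfun; split_ifs <;> omega
    · rintro (_ | i) hz
      · exact absurd hz (by simp)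
      · show (2 : ℕ) ≤ _
        have hz' : gfun (k+3) i = 0 := hz
        unfold gfun at hz'
        split_ifs at hz' with h1 h2
        -- h1 : ¬ i.val % 3 = 1, h2 : ¬ (m % 3 = 1 ∧ i.val = m - 1)
        have hi3 : i.val % 3 = 0 ∨ i.val % 3 = 2 := by omega
        have hjlem : ∃ j : Fin (k+3), (SimpleGraph.cycleGraph (k+3)).Adj i j ∧
            gfun (k+3) j = 2 := by
          rcases hi3 with hi3 | hi3
          · refine ⟨i + 1, ?_, ?_⟩
            · rw [SimpleGraph.cycleGraph_adj']
              right
              rw [add_sub_cancel_left]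
              rfl
            · have hne : i ≠ Fin.last (k+2) := by
                intro h
                have hval : i.val = k + 2 := by rw [h]; rfl
                exact h2 ⟨by omega, by omega⟩
              have hv : ((i + 1 : Fin (k+3)) : ℕ) = i.val + 1 := by
                rw [Fin.val_add_one, if_neg hne]
              unfold gfun
              rw [if_pos (by omega)]
          · refine ⟨i - 1, ?_, ?_⟩
            · rw [SimpleGraph.cycleGraph_adj']
              left
              rw [sub_sub_cancel]
              rfl
            · have hne : i ≠ 0 := by
                intro h; rw [h] at hi3; simp at hi3
              have hv : ((i - 1 : Fin (k+3)) : ℕ) = i.val - 1 := by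
                rw [Fin.coe_sub_one, if_neg hne]
              unfold gfun
              rw [if_pos (by omega)]
        obtain ⟨j, hadj, hj2⟩ := hjlem
        refine ncard_ge_two (by simp) (x := none) (y := some j) ⟨trivial, rfl⟩ ⟨hadj, hj2⟩
    · rintro (_ | i) hnz
      · show (1 : ℕ) ≤ _
        refine ncard_ge_one (x := some ⟨1, by omega⟩) ⟨trivial, ?_⟩
        show gfun (k+3) ⟨1, _⟩ = 2
        unfold gfun
        simp
      · show (1 : ℕ) ≤ _
        exact ncard_ge_one (x := none) ⟨trivial, rfl⟩
  · rw [Fintype.sum_option]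
    show 2 + ∑ i, gfun (k+3) i = _
    rw [gfun_sum (k+3) (by omega)]
    omega

end Upper

section Lower

lemma lower (k : ℕ) (f : Option (Fin (k+3)) → ℕ) (hf : IsRkTDF (wheel (k+3)) 2 f) :
    (2*(k+3)+2)/3 + 2 ≤ ∑ v, f v := by
  classical
  obtain ⟨hle, h0, h1⟩ := hf
  set d : Fin (k+3) → ℕ := fun i =>
    ∑ j, if (SimpleGraph.cycleGraph (k+3)).Adj i j ∧ f (some j) = 2 then 1 else 0 with hd
  set a : ℕ := ∑ j : Fin (k+3), if f (some j) = 0 then 1 else 0 with ha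
  set b : ℕ := ∑ j : Fin (k+3), if f (some j) = 1 then 1 else 0 with hb
  set c : ℕ := ∑ j : Fin (k+3), if f (some j) = 2 then 1 else 0 with hc
  -- ncard at the hub
  have hnone : {w | (wheel (k+3)).Adj none w ∧ f w = 2}.ncard = c := by
    rw [ncard_eq_sum, Fintype.sum_option]
    simp [hc]
  -- ncard at cycle vertices
  have hsome : ∀ i : Fin (k+3), {w | (wheel (k+3)).Adj (some i) w ∧ f w = 2}.ncard
      = (if f none = 2 then 1 else 0) + d i := by
    intro i
    rw [ncard_eq_sum, Fintype.sum_option]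
    simp [hd]
  -- double counting
  have hdeg : ∀ j : Fin (k+3), (∑ i : Fin (k+3),
      if (SimpleGraph.cycleGraph (k+3)).Adj i j ∧ f (some j) = 2 then 1 else 0)
      = if f (some j) = 2 then 2 else 0 := by
    intro j
    by_cases hj : f (some j) = 2
    · rw [if_pos hj]
      have : ∀ i : Fin (k+3),
          (if (SimpleGraph.cycleGraph (k+3)).Adj i j ∧ f (some j) = 2 then 1 else 0)
          = if (SimpleGraph.cycleGraph (k+3)).Adj j i then 1 else 0 := by
        intro i
        by_cases hadj : (SimpleGraph.cycleGraph (k+3)).Adj j i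
        · rw [if_pos ⟨hadj.symm, hj⟩, if_pos hadj]
        · rw [if_neg (fun h => hadj h.1.symm), if_neg hadj]
      rw [Finset.sum_congr rfl (fun i _ => this i), ← Finset.card_filter,
        ← SimpleGraph.neighborFinset_eq_filter]
      exact SimpleGraph.cycleGraph_degree_three_le
    · simp [hj]
  have hD : ∑ i, d i = 2 * c := by
    rw [hd, Finset.sum_comm]
    rw [Finset.sum_congr rfl (fun j _ => hdeg j), hc, Finset.mul_sum]
    exact Finset.sum_congr rfl (fun j _ => by split_ifs <;> ring)
  -- counting facts
  have habc : a + b + c = k + 3 := by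
    rw [ha, hb, hc, ← Finset.sum_add_distrib, ← Finset.sum_add_distrib]
    have : ∀ j : Fin (k+3), ((if f (some j) = 0 then 1 else 0) +
        (if f (some j) = 1 then 1 else 0)) + (if f (some j) = 2 then 1 else 0) = 1 := by
      intro j
      have := hle (some j)
      split_ifs <;> omega
    rw [Finset.sum_congr rfl (fun j _ => this j), Finset.sum_const, Finset.card_univ]
    simp
  have hsum : ∑ j : Fin (k+3), f (some j) = b + 2 * c := by
    have : ∀ j : Fin (k+3), f (some j)
        = (if f (some j) = 1 then 1 else 0) + 2 * (if f (some j) = 2 then 1 else 0) := by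
      intro j
      have := hle (some j)
      split_ifs <;> omega
    rw [Finset.sum_congr rfl (fun j _ => this j), Finset.sum_add_distrib, ← Finset.mul_sum,
      ← hb, ← hc]
  -- pointwise domination condition
  have key : (k+3) + a ≤ (k+3) * (if f none = 2 then 1 else 0) + 2 * c := by
    have hpt : ∀ i : Fin (k+3), 1 + (if f (some i) = 0 then 1 else 0)
        ≤ (if f none = 2 then 1 else 0) + d i := by
      intro i
      by_cases hz : f (some i) = 0
      · have h := h0 (some i) hz
        rw [hsome i] at h
        rw [if_pos hz]
        omega
      · have h := h1 (some i) hz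
        rw [hsome i] at h
        rw [if_neg hz]
        omega
    calc (k+3) + a = ∑ i : Fin (k+3), (1 + if f (some i) = 0 then 1 else 0) := by
          rw [Finset.sum_add_distrib, Finset.sum_const, Finset.card_univ, ← ha]
          simp [mul_comm]
      _ ≤ ∑ i : Fin (k+3), ((if f none = 2 then 1 else 0) + d i) :=
          Finset.sum_le_sum fun i _ => hpt i
      _ = (k+3) * (if f none = 2 then 1 else 0) + 2 * c := by
          rw [Finset.sum_add_distrib, Finset.sum_const, Finset.card_univ, hD]
          simp [mul_comm]
  -- hub conditions
  have hc0 : f none = 0 → 2 ≤ c := fun h => by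
    have := h0 none h; rwa [hnone] at this
  have hc1 : f none ≠ 0 → 1 ≤ c := fun h => by
    have := h1 none h; rwa [hnone] at this
  rw [Fintype.sum_option, hsum]
  have hfle := hle none
  by_cases ht : f none = 2
  · rw [if_pos ht] at key
    have := hc1 (by omega)
    omega
  · rw [if_neg ht] at key
    have h01 : f none = 0 ∨ f none = 1 := by omega
    rcases h01 with h01 | h01
    · have := hc0 h01
      omega
    · have := hc1 (by omega)
      omega

end Lower

lemma romanKTDN_wheel (k : ℕ) : romanKTDN (wheel (k+3)) 2 = (2*(k+3)+2)/3 + 2 := by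
  obtain ⟨hf, hw⟩ := upper k
  apply le_antisymm
  · exact Nat.sInf_le ⟨_, hf, hw⟩
  · refine le_csInf ⟨_, _, hf, hw⟩ ?_
    rintro N ⟨g, hg, rfl⟩
    exact lower k g hg

lemma ceil_aux (k : ℕ) : (⌈(2 * ((k + 4 : ℕ) - 1 : ℚ)) / 3⌉ : ℤ) = ((2*(k+3)+2)/3 : ℕ) := by
  have h3 : ((2*(k+3)+2)/3 : ℕ) = (2*k+8)/3 := by omega
  rw [h3]
  set q : ℕ := (2*k+8)/3 with hq
  have h1 : 3 * q ≤ 2 * k + 8 := by omega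
  have h2 : 2 * k + 6 ≤ 3 * q := by omega
  rw [Int.ceil_eq_iff]
  constructor
  · push_cast
    rw [lt_div_iff₀ (by norm_num)]
    have : (3 * q : ℚ) ≤ 2 * k + 8 := by exact_mod_cast h1
    linarith
  · push_cast
    rw [div_le_iff₀ (by norm_num)]
    have : (2 * k + 6 : ℚ) ≤ 3 * q := by exact_mod_cast h2
    linarith

theorem stmt19 (n : ℕ) (hn : 4 ≤ n) :
    (romanKTDN (wheel (n - 1)) 2 : ℤ) = ⌈(2 * (n - 1 : ℚ)) / 3⌉ + 2 := by
  obtain ⟨k, hk⟩ : ∃ k, n = k + 4 := ⟨n - 4, by omega⟩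
  subst hk
  have he : k + 4 - 1 = k + 3 := rfl
  rw [he, romanKTDN_wheel, ceil_aux]
  push_cast
  ring
end
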